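/- In the endomorphism algebra of K[x_1,…,x_n] (char K = 0), the operators θ_i := X_i ∘ D_i and D_j satisfy the defining relations of the n-th shift algebra: D_i ∘ θ_i = (θ_i + 1) ∘ D_i for all i, D_i ∘ θ_j = θ_j ∘ D_i for i ≠ j, and all θ's commute pairwise and all D's commute pairwise; moreover the family {θ^a ∘ D^b : a, b ∈ ℕ^n} (where θ^a := θ_1^{a_1}∘⋯∘θ_n^{a_n}) is linearly independent over K. Consequently the assignment x_i ↦ θ_i, s_i ↦ D_i realizes the n-th shift algebra as a K-subalgebra of the n-th Weyl algebra A_n, i.e. this map is an injective K-algebra homomorphism. -/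

import Mathlib

open MvPolynomial

/-- Multiplication by the variable `x i`, as a `K`-linear endomorphism of
`K[x_1,…,x_n]`. -/
noncomputable def Xop (K : Type) [Field K] {n : ℕ} (i : Fin n) :
    Module.End K (MvPolynomial (Fin n) K) :=
  LinearMap.mulLeft K (X i)

/-- The `i`-th partial derivative, as a `K`-linear endomorphism of `K[x_1,…,x_n]`. -/
noncomputable def Dop (K : Type) [Field K] {n : ℕ} (i : Fin n) :
    Module.End K (MvPolynomial (Fin n) K) :=
  (pderiv i).toLinearMap

/-- `X^a := X_1^{a_1} ∘ ⋯ ∘ X_n^{a_n}`. -/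
noncomputable def Xpow (K : Type) [Field K] {n : ℕ} (a : Fin n → ℕ) :
    Module.End K (MvPolynomial (Fin n) K) :=
  (List.ofFn fun i => Xop K i ^ a i).prod

/-- `D^b := D_1^{b_1} ∘ ⋯ ∘ D_n^{b_n}`. -/
noncomputable def Dpow (K : Type) [Field K] {n : ℕ} (b : Fin n → ℕ) :
    Module.End K (MvPolynomial (Fin n) K) :=
  (List.ofFn fun i => Dop K i ^ b i).prod

/-- The `n`-th Weyl algebra `A_n`, realized as the `K`-subalgebra of
`End_K(K[x_1,…,x_n])` generated by `X_1,…,X_n, D_1,…,D_n`. -/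
noncomputable def WeylAlg (K : Type) [Field K] (n : ℕ) :
    Subalgebra K (Module.End K (MvPolynomial (Fin n) K)) :=
  Algebra.adjoin K (Set.range (Xop K (n := n)) ∪ Set.range (Dop K (n := n)))

/-- The `i`-th Euler operator `θ_i := X_i ∘ D_i`. -/
noncomputable def thetaOp (K : Type) [Field K] {n : ℕ} (i : Fin n) :
    Module.End K (MvPolynomial (Fin n) K) :=
  Xop K i * Dop K i

/-- Evaluation `f ↦ f(θ_1,…,θ_n)` of a polynomial `f ∈ K[t_1,…,t_n]` at the (pairwise
commuting) Euler operators. -/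
noncomputable def thetaEval (K : Type) [Field K] {n : ℕ}
    (f : MvPolynomial (Fin n) K) : Module.End K (MvPolynomial (Fin n) K) :=
  ∑ m ∈ f.support, f.coeff m • (List.ofFn fun i => thetaOp K i ^ m i).prod

/-- The `z`-th graded part `A_n^{(z)}`: the `K`-linear span of the operators
`X^a ∘ D^b` with `b − a = z` componentwise. -/
noncomputable def gradePart (K : Type) [Field K] {n : ℕ} (z : Fin n → ℤ) :
    Submodule K (Module.End K (MvPolynomial (Fin n) K)) :=
  Submodule.span K
    {F | ∃ a b : Fin n → ℕ, (∀ i, (b i : ℤ) - (a i : ℤ) = z i) ∧ F = Xpow K a * Dpow K b}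

/-- `e(z)_i := −z_i` if `z_i < 0`, and `0` otherwise. -/
def ez {n : ℕ} (z : Fin n → ℤ) : Fin n → ℕ := fun i => (-(z i)).toNat

/-- `w(z)_i := z_i` if `z_i > 0`, and `0` otherwise. -/
def wz {n : ℕ} (z : Fin n → ℤ) : Fin n → ℕ := fun i => (z i).toNat

/-- `θ^a := θ_1^{a_1} ∘ ⋯ ∘ θ_n^{a_n}`. -/
noncomputable def Tpow (K : Type) [Field K] {n : ℕ} (a : Fin n → ℕ) :
    Module.End K (MvPolynomial (Fin n) K) :=
  (List.ofFn fun i => thetaOp K i ^ a i).prod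

/-- The defining relations of the `n`-th shift algebra on the free algebra on
generators `x_1,…,x_n` (encoded `Sum.inl i`) and `s_1,…,s_n` (encoded `Sum.inr i`):
all `x`'s commute, all `s`'s commute, `s_i x_j = x_j s_i` for `i ≠ j`, and
`s_i x_i = (x_i + 1) s_i`. -/
inductive ShiftRel (K : Type) [Field K] (n : ℕ) :
    FreeAlgebra K (Fin n ⊕ Fin n) → FreeAlgebra K (Fin n ⊕ Fin n) → Prop
  | xx (i j : Fin n) : ShiftRel K n
      (FreeAlgebra.ι K (Sum.inl i) * FreeAlgebra.ι K (Sum.inl j))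
      (FreeAlgebra.ι K (Sum.inl j) * FreeAlgebra.ι K (Sum.inl i))
  | ss (i j : Fin n) : ShiftRel K n
      (FreeAlgebra.ι K (Sum.inr i) * FreeAlgebra.ι K (Sum.inr j))
      (FreeAlgebra.ι K (Sum.inr j) * FreeAlgebra.ι K (Sum.inr i))
  | sx (i j : Fin n) (h : i ≠ j) : ShiftRel K n
      (FreeAlgebra.ι K (Sum.inr i) * FreeAlgebra.ι K (Sum.inl j))
      (FreeAlgebra.ι K (Sum.inl j) * FreeAlgebra.ι K (Sum.inr i))
  | shift (i : Fin n) : ShiftRel K n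
      (FreeAlgebra.ι K (Sum.inr i) * FreeAlgebra.ι K (Sum.inl i))
      ((FreeAlgebra.ι K (Sum.inl i) + 1) * FreeAlgebra.ι K (Sum.inr i))

/-- The `n`-th shift algebra, presented by generators and relations. -/
noncomputable abbrev ShiftAlg (K : Type) [Field K] (n : ℕ) := RingQuot (ShiftRel K n)

set_option linter.unusedSectionVars false

section Aux

variable (K : Type) [Field K] {n : ℕ}

variable (K : Type) [Field K] {n : ℕ}

lemma hXX (i j : Fin n) : Xop K i * Xop K j = Xop K j * Xop K i := by
  ext p
  simp [Xop, Module.End.mul_apply, mul_left_comm]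

lemma pd_comm (i j : Fin n) (p : MvPolynomial (Fin n) K) :
    pderiv i (pderiv j p) = pderiv j (pderiv i p) := by
  induction p using MvPolynomial.induction_on with
  | C a => simp
  | add p q hp hq => simp [hp, hq]
  | mul_X p k hp => simp [pderiv_mul, hp, Pi.single_apply]; split_ifs <;> (try simp only [map_zero]) <;> ring

lemma hDD (i j : Fin n) : Dop K i * Dop K j = Dop K j * Dop K i :=
  LinearMap.ext fun p => pd_comm K i j p

lemma hDX (i : Fin n) : Dop K i * Xop K i = Xop K i * Dop K i + 1 := by
  ext p
  simp [Dop, Xop, Module.End.mul_apply, pderiv_mul]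

lemma hDXne (i j : Fin n) (h : i ≠ j) : Dop K i * Xop K j = Xop K j * Dop K i := by
  ext p
  simp [Dop, Xop, Module.End.mul_apply, pderiv_mul, pderiv_X_of_ne h.symm]

lemma hTT (i j : Fin n) : thetaOp K i * thetaOp K j = thetaOp K j * thetaOp K i := by
  rcases eq_or_ne i j with rfl | h
  · rfl
  · show Commute _ _
    unfold thetaOp
    exact Commute.mul_left
      (Commute.mul_right (hXX K i j) ((hDXne K j i h.symm).symm))
      (Commute.mul_right (hDXne K i j h) (hDD K i j))

lemma hDtheta (i : Fin n) : Dop K i * thetaOp K i = (thetaOp K i + 1) * Dop K i := by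
  unfold thetaOp
  rw [← mul_assoc, hDX, add_mul, one_mul]

lemma hDthetane (i j : Fin n) (h : i ≠ j) : Dop K i * thetaOp K j = thetaOp K j * Dop K i := by
  unfold thetaOp
  exact Commute.mul_right (hDXne K i j h) (hDD K i j)

lemma ofFn_prod_eq_noncommProd {M : Type*} [Monoid M] (g : Fin n → M)
    (h : ∀ i j, Commute (g i) (g j)) :
    (List.ofFn g).prod = Finset.univ.noncommProd g (fun i _ j _ _ => h i j) := by
  classical
  rw [List.ofFn_eq_map]
  symm
  refine Eq.trans (Finset.noncommProd_congr (List.toFinset_finRange n).symm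
    (fun x _ => rfl) (fun i _ j _ _ => h i j)) ?_
  exact Finset.noncommProd_toFinset _ _ _ (List.nodup_finRange n)

lemma Dop_monomial (i : Fin n) (c : Fin n →₀ ℕ) :
    Dop K i (monomial c 1) = (c i : K) • monomial (c - Finsupp.single i 1) 1 := by
  simp [Dop, pderiv_monomial, smul_monomial]

lemma Dop_pow_monomial (i : Fin n) (k : ℕ) (c : Fin n →₀ ℕ) :
    (Dop K i ^ k) (monomial c 1)
      = ((c i).descFactorial k : K) • monomial (c - Finsupp.single i k) 1 := by
  induction k with
  | zero => simp
  | succ k ih =>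
    rw [pow_succ', Module.End.mul_apply, ih, map_smul, Dop_monomial]
    have h1 : (c - Finsupp.single i k) i = c i - k := by simp
    have h2 : c - Finsupp.single i k - Finsupp.single i 1 = c - Finsupp.single i (k+1) := by
      ext j
      simp only [Finsupp.coe_tsub, Pi.sub_apply, Finsupp.single_apply]
      split_ifs <;> omega
    rw [h1, h2, smul_smul, Nat.descFactorial_succ, Nat.cast_mul, mul_comm]

lemma theta_monomial (i : Fin n) (c : Fin n →₀ ℕ) :
    thetaOp K i (monomial c 1) = (c i : K) • monomial c 1 := by
  simp only [thetaOp, Module.End.mul_apply, Dop_monomial, map_smul]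
  rw [Xop, LinearMap.mulLeft_apply]
  rcases Nat.eq_zero_or_pos (c i) with h | h
  · simp [h]
  · have hc : Finsupp.single i 1 + (c - Finsupp.single i 1) = c := by
      ext j
      simp only [Finsupp.add_apply, Finsupp.coe_tsub, Pi.sub_apply, Finsupp.single_apply]
      split_ifs with hj
      · subst hj; omega
      · omega
    have : X i * monomial (c - Finsupp.single i 1) (1:K) = monomial c 1 := by
      rw [X, monomial_mul, one_mul, hc]
    rw [this]

lemma theta_pow_monomial (i : Fin n) (k : ℕ) (c : Fin n →₀ ℕ) :
    (thetaOp K i ^ k) (monomial c 1) = ((c i : K) ^ k) • monomial c 1 := by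
  induction k with
  | zero => simp
  | succ k ih =>
    rw [pow_succ', Module.End.mul_apply, ih, map_smul, theta_monomial, smul_smul]
    ring_nf

lemma sum_single_apply (b : Fin n → ℕ) (j : Fin n) :
    (∑ i, Finsupp.single i (b i)) j = b j := by
  rw [Finsupp.finset_sum_apply]
  simp [Finsupp.single_apply]

lemma Dpow_monomial (b : Fin n → ℕ) (c : Fin n →₀ ℕ) :
    Dpow K b (monomial c 1)
      = ((∏ i, (c i).descFactorial (b i) : ℕ) : K) •
          monomial (c - ∑ i, Finsupp.single i (b i)) 1 := by
  have comm : ∀ i j, Commute (Dop K i ^ b i) (Dop K j ^ b j) :=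
    fun i j => (Commute.pow_pow (hDD K i j)) _ _
  rw [Dpow, ofFn_prod_eq_noncommProd _ comm]
  have main : ∀ s : Finset (Fin n),
      (s.noncommProd (fun i => Dop K i ^ b i) (Pairwise.set_pairwise (fun i j _ => comm i j) _)) (monomial c 1)
        = ((∏ i ∈ s, (c i).descFactorial (b i) : ℕ) : K) •
            monomial (c - ∑ i ∈ s, Finsupp.single i (b i)) 1 := by
    intro s
    induction s using Finset.cons_induction with
    | empty => simp
    | cons a s ha ih =>
      rw [Finset.noncommProd_cons, Module.End.mul_apply, ih, map_smul, Dop_pow_monomial]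
      have h1 : (c - ∑ i ∈ s, Finsupp.single i (b i)) a = c a := by
        rw [Finsupp.coe_tsub, Pi.sub_apply]
        have : (∑ i ∈ s, Finsupp.single i (b i)) a = 0 := by
          rw [Finsupp.finset_sum_apply]
          exact Finset.sum_eq_zero fun i hi =>
            Finsupp.single_apply_eq_zero.2 fun h => absurd (h ▸ hi) ha
        omega
      have h2 : c - ∑ i ∈ s, Finsupp.single i (b i) - Finsupp.single a (b a)
          = c - ∑ i ∈ Finset.cons a s ha, Finsupp.single i (b i) := by
        rw [tsub_tsub, Finset.sum_cons, add_comm]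
      rw [h1, h2, smul_smul, Finset.prod_cons, Nat.cast_mul, mul_comm]
  exact main Finset.univ

lemma Tpow_monomial (a : Fin n → ℕ) (c : Fin n →₀ ℕ) :
    Tpow K a (monomial c 1) = (∏ i, (c i : K) ^ a i) • monomial c 1 := by
  have comm : ∀ i j, Commute (thetaOp K i ^ a i) (thetaOp K j ^ a j) :=
    fun i j => (Commute.pow_pow (hTT K i j)) _ _
  rw [Tpow, ofFn_prod_eq_noncommProd _ comm]
  have main : ∀ s : Finset (Fin n),
      (s.noncommProd (fun i => thetaOp K i ^ a i) (Pairwise.set_pairwise (fun i j _ => comm i j) _)) (monomial c 1)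
        = (∏ i ∈ s, (c i : K) ^ a i) • monomial c 1 := by
    intro s
    induction s using Finset.cons_induction with
    | empty => simp
    | cons x s hx ih =>
      rw [Finset.noncommProd_cons, Module.End.mul_apply, ih, map_smul, theta_pow_monomial,
        smul_smul, Finset.prod_cons, mul_comm]
  exact main Finset.univ

lemma vanish_nat {K : Type} [Field K] [CharZero K] :
    ∀ (n : ℕ) (f : MvPolynomial (Fin n) K),
      (∀ d : Fin n → ℕ, eval (fun i => (d i : K)) f = 0) → f = 0 := by
  intro n
  induction n with
  | zero =>
    intro f hf
    rw [f.eq_C_of_isEmpty] at hf ⊢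
    simpa using hf (fun i => 0)
  | succ n ih =>
    intro f hf
    have key : ∀ d : Fin n → ℕ,
        Polynomial.map (eval fun i => (d i : K)) (finSuccEquiv K n f) = 0 := by
      intro d
      apply Polynomial.eq_zero_of_infinite_isRoot
      apply Set.Infinite.mono (s := Set.range (fun m : ℕ => (m : K)))
      · rintro x ⟨m, rfl⟩
        simp only [Set.mem_setOf_eq, Polynomial.IsRoot.def]
        rw [← eval_eq_eval_mv_eval']
        have hfun : (Fin.cons (m : K) (fun i => (d i : K)) : Fin (n+1) → K)
            = fun i => (((Fin.cons m d : Fin (n+1) → ℕ) i : ℕ) : K) := by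
          funext i; refine Fin.cases ?_ ?_ i <;> simp
        rw [hfun]
        exact hf (Fin.cons m d)
      · exact Set.infinite_range_of_injective (fun a b h => Nat.cast_injective h)
    have hcoeff : ∀ k : ℕ, (finSuccEquiv K n f).coeff k = 0 := by
      intro k
      apply ih
      intro d
      have h2 := congrArg (fun q => Polynomial.coeff q k) (key d)
      simpa [Polynomial.coeff_map] using h2
    have : finSuccEquiv K n f = 0 := Polynomial.ext fun k => by simp [hcoeff k]
    exact (map_eq_zero_iff _ (finSuccEquiv K n).injective).mp this

variable [CharZero K]

lemma TD_li : LinearIndependent K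
    (fun p : (Fin n → ℕ) × (Fin n → ℕ) => Tpow K p.1 * Dpow K p.2) := by
  classical
  rw [linearIndependent_iff]
  intro l hl
  ext p
  obtain ⟨a₀, b₀⟩ := p
  -- the combination applied to the monomial x^(b₀+d), coefficient of x^d
  have happ : ∀ d : Fin n → ℕ,
      (∏ i, ((b₀ i + d i).descFactorial (b₀ i) : K)) *
        (∑ q ∈ l.support.filter (fun q => q.2 = b₀),
          l q * ∏ i, (d i : K) ^ q.1 i) = 0 := by
    intro d
    set cF : Fin n →₀ ℕ := Finsupp.equivFunOnFinite.symm (fun i => b₀ i + d i) with hcF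
    set dF : Fin n →₀ ℕ := Finsupp.equivFunOnFinite.symm d with hdF
    have hcFa : ∀ i, cF i = b₀ i + d i := fun i => rfl
    have hdFa : ∀ i, dF i = d i := fun i => rfl
    have h0 := congrArg (fun (F : Module.End K (MvPolynomial (Fin n) K)) =>
      coeff dF (F (monomial cF 1))) hl
    rw [Finsupp.linearCombination_apply, Finsupp.sum] at h0
    simp only [LinearMap.coe_sum, Finset.sum_apply, LinearMap.smul_apply, LinearMap.zero_apply,
      coeff_zero, coeff_sum] at h0
    -- h0 : ∑ q ∈ l.support, coeff dF (l q • (Tpow * Dpow) (monomial cF 1)) = 0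
    rw [← h0, Finset.mul_sum, Finset.sum_filter, Finset.sum_congr rfl]
    intro q hq
    obtain ⟨a, b⟩ := q
    rw [Module.End.mul_apply, Dpow_monomial, map_smul, Tpow_monomial, coeff_smul, coeff_smul,
      coeff_smul, coeff_monomial]
    have hsub : ∀ i, (cF - ∑ i, Finsupp.single i (b i)) i = b₀ i + d i - b i := by
      intro i
      rw [Finsupp.coe_tsub, Pi.sub_apply, sum_single_apply, hcFa]
    by_cases hb : b = b₀
    · subst hb
      have he : cF - ∑ i, Finsupp.single i (b i) = dF := by
        ext i; rw [hsub, hdFa]; omega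
      rw [if_pos rfl, he, if_pos rfl]
      simp only [smul_eq_mul, mul_one, Nat.cast_prod, hcFa, hdFa]
      ring
    · rw [if_neg hb]
      by_cases hle : ∀ i, b i ≤ b₀ i + d i
      · have hne : cF - ∑ i, Finsupp.single i (b i) ≠ dF := by
          intro hcon
          apply hb
          funext i
          have := congrArg (fun v => v i) hcon
          simp only [hsub, hdFa] at this
          have := hle i
          omega
        rw [if_neg hne]
        simp
      · push_neg at hle
        obtain ⟨i, hi⟩ := hle
        have : (∏ j, (cF j).descFactorial (b j)) = 0 := by
          apply Finset.prod_eq_zero (Finset.mem_univ i)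
          rw [hcFa]
          exact Nat.descFactorial_eq_zero_iff_lt.2 hi
        rw [this]
        simp
  -- extract the polynomial identity
  have hpoly : ∀ d : Fin n → ℕ,
      (∑ q ∈ l.support.filter (fun q => q.2 = b₀),
        l q * ∏ i, (d i : K) ^ q.1 i) = 0 := by
    intro d
    have hD : (∏ i, ((b₀ i + d i).descFactorial (b₀ i) : K)) ≠ 0 := by
      apply Finset.prod_ne_zero_iff.2
      intro i _
      simp only [ne_eq, Nat.cast_eq_zero]
      intro hz
      have := Nat.descFactorial_eq_zero_iff_lt.1 hz
      omega
    exact (mul_eq_zero.1 (happ d)).resolve_left hD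
  -- build the MvPolynomial and use vanish_nat
  set f : MvPolynomial (Fin n) K :=
    ∑ q ∈ l.support.filter (fun q => q.2 = b₀),
      monomial (Finsupp.equivFunOnFinite.symm q.1) (l q) with hf
  have hfz : f = 0 := by
    apply vanish_nat
    intro d
    rw [hf, map_sum]
    rw [← hpoly d]
    apply Finset.sum_congr rfl
    intro q hq
    rw [eval_monomial]
    rw [Finsupp.prod_pow]
    rfl
  have := congrArg (coeff (Finsupp.equivFunOnFinite.symm a₀)) hfz
  rw [hf, coeff_zero] at this
  rw [coeff_sum] at this
  by_cases hmem : (a₀, b₀) ∈ l.support.filter (fun q => q.2 = b₀)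
  · rw [Finset.sum_eq_single (a₀, b₀)] at this
    · rw [coeff_monomial, if_pos rfl] at this
      simpa using this
    · intro q hq hqne
      rw [coeff_monomial, if_neg]
      intro hcon
      apply hqne
      have h1 : q.1 = a₀ := Finsupp.equivFunOnFinite.symm.injective hcon
      have h2 : q.2 = b₀ := (Finset.mem_filter.1 hq).2
      exact Prod.ext h1 h2
    · intro hcon
      exact absurd hmem hcon
  · have : l (a₀, b₀) = 0 := by
      by_contra hcon
      apply hmem
      rw [Finset.mem_filter]
      exact ⟨Finsupp.mem_support_iff.2 hcon, rfl⟩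
    simpa using this

noncomputable def phi0 (n : ℕ) :
    FreeAlgebra K (Fin n ⊕ Fin n) →ₐ[K] Module.End K (MvPolynomial (Fin n) K) :=
  FreeAlgebra.lift K (Sum.elim (thetaOp K) (Dop K))

lemma phi0_rel {n : ℕ} : ∀ ⦃x y⦄, ShiftRel K n x y → phi0 K n x = phi0 K n y := by
  intro x y h
  induction h with
  | xx i j => simp only [phi0, map_mul, FreeAlgebra.lift_ι_apply, Sum.elim_inl]; exact hTT K i j
  | ss i j => simp only [phi0, map_mul, FreeAlgebra.lift_ι_apply, Sum.elim_inr]; exact hDD K i j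
  | sx i j hij =>
      simp only [phi0, map_mul, FreeAlgebra.lift_ι_apply, Sum.elim_inl, Sum.elim_inr]
      exact hDthetane K i j hij
  | shift i =>
      simp only [phi0, map_mul, map_add, map_one, FreeAlgebra.lift_ι_apply, Sum.elim_inl,
        Sum.elim_inr]
      exact hDtheta K i

noncomputable def phi (n : ℕ) : ShiftAlg K n →ₐ[K] Module.End K (MvPolynomial (Fin n) K) :=
  RingQuot.liftAlgHom K ⟨phi0 K n, phi0_rel K⟩

noncomputable def Xs (n : ℕ) (i : Fin n) : ShiftAlg K n :=
  RingQuot.mkAlgHom K (ShiftRel K n) (FreeAlgebra.ι K (Sum.inl i))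

noncomputable def Ss (n : ℕ) (i : Fin n) : ShiftAlg K n :=
  RingQuot.mkAlgHom K (ShiftRel K n) (FreeAlgebra.ι K (Sum.inr i))

lemma phi_x {n : ℕ} (i : Fin n) : phi K n (Xs K n i) = thetaOp K i := by
  rw [Xs, phi, RingQuot.liftAlgHom_mkAlgHom_apply]
  simp [phi0]

lemma phi_s {n : ℕ} (i : Fin n) : phi K n (Ss K n i) = Dop K i := by
  rw [Ss, phi, RingQuot.liftAlgHom_mkAlgHom_apply]
  simp [phi0]

lemma rxx {n : ℕ} (i j : Fin n) : Xs K n i * Xs K n j = Xs K n j * Xs K n i := by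
  simp only [Xs]
  rw [← map_mul, ← map_mul]
  exact RingQuot.mkAlgHom_rel K (ShiftRel.xx i j)

lemma rss {n : ℕ} (i j : Fin n) : Ss K n i * Ss K n j = Ss K n j * Ss K n i := by
  simp only [Ss]
  rw [← map_mul, ← map_mul]
  exact RingQuot.mkAlgHom_rel K (ShiftRel.ss i j)

lemma rsx {n : ℕ} (i j : Fin n) (h : i ≠ j) : Ss K n i * Xs K n j = Xs K n j * Ss K n i := by
  simp only [Ss, Xs]
  rw [← map_mul, ← map_mul]
  exact RingQuot.mkAlgHom_rel K (ShiftRel.sx i j h)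

lemma rshift {n : ℕ} (i : Fin n) :
    Ss K n i * Xs K n i = Xs K n i * Ss K n i + Ss K n i := by
  have h := RingQuot.mkAlgHom_rel K (ShiftRel.shift (K := K) (n := n) i)
  rw [map_mul, map_mul, map_add, map_one, add_mul, one_mul] at h
  exact h

noncomputable def xmon {n : ℕ} (a : Fin n → ℕ) : ShiftAlg K n :=
  (List.ofFn fun i => Xs K n i ^ a i).prod

noncomputable def smon {n : ℕ} (b : Fin n → ℕ) : ShiftAlg K n :=
  (List.ofFn fun i => Ss K n i ^ b i).prod

lemma mul_ofFn_pow {M : Type*} [Monoid M] (g : Fin n → M)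
    (h : ∀ i j, Commute (g i) (g j)) (a : Fin n → ℕ) (i : Fin n) :
    g i * (List.ofFn fun j => g j ^ a j).prod
      = (List.ofFn fun j => g j ^ (Function.update a i (a i + 1) j)).prod := by
  classical
  have c1 : ∀ i' j, Commute (g i' ^ a i') (g j ^ a j) := fun i' j => (h i' j).pow_pow _ _
  have c2 : ∀ i' j, Commute (g i' ^ Function.update a i (a i + 1) i')
      (g j ^ Function.update a i (a i + 1) j) := fun i' j => (h i' j).pow_pow _ _
  rw [ofFn_prod_eq_noncommProd _ c1, ofFn_prod_eq_noncommProd _ c2,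
    ← Finset.mul_noncommProd_erase Finset.univ (Finset.mem_univ i)
      (fun j => g j ^ a j) (fun x _ y _ _ => c1 x y),
    ← Finset.mul_noncommProd_erase Finset.univ (Finset.mem_univ i)
      (fun j => g j ^ Function.update a i (a i + 1) j) (fun x _ y _ _ => c2 x y),
    ← mul_assoc]
  congr 1
  · rw [Function.update_self, pow_succ']
  · exact Finset.noncommProd_congr rfl
      (fun x hx => by rw [Function.update_of_ne (Finset.mem_erase.1 hx).1]) _

lemma xmon_zero {n : ℕ} : xmon K (fun _ : Fin n => 0) = 1 := by
  rw [xmon]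
  apply List.prod_eq_one
  intro x hx
  rw [List.mem_ofFn] at hx
  obtain ⟨i, rfl⟩ := hx
  exact pow_zero _

lemma smon_zero {n : ℕ} : smon K (fun _ : Fin n => 0) = 1 := by
  rw [smon]
  apply List.prod_eq_one
  intro x hx
  rw [List.mem_ofFn] at hx
  obtain ⟨i, rfl⟩ := hx
  exact pow_zero _

lemma xs_comm {n : ℕ} : ∀ i j, Commute (Xs K n i) (Xs K n j) := fun i j => rxx K i j
lemma ss_comm {n : ℕ} : ∀ i j, Commute (Ss K n i) (Ss K n j) := fun i j => rss K i j

lemma xmon_succ {n : ℕ} (a : Fin n → ℕ) (i : Fin n) :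
    Xs K n i * xmon K a = xmon K (Function.update a i (a i + 1)) :=
  mul_ofFn_pow _ (xs_comm K) a i

lemma smon_succ {n : ℕ} (b : Fin n → ℕ) (i : Fin n) :
    Ss K n i * smon K b = smon K (Function.update b i (b i + 1)) :=
  mul_ofFn_pow _ (ss_comm K) b i

lemma hadjtop {n : ℕ} :
    Algebra.adjoin K (Set.range (Xs K n) ∪ Set.range (Ss K n)) = ⊤ := by
  have h1 : (Set.range fun z : Fin n ⊕ Fin n =>
      RingQuot.mkAlgHom K (ShiftRel K n) (FreeAlgebra.ι K z))
      = Set.range (Xs K n) ∪ Set.range (Ss K n) := by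
    rw [show (fun z : Fin n ⊕ Fin n =>
        RingQuot.mkAlgHom K (ShiftRel K n) (FreeAlgebra.ι K z))
        = Sum.elim (Xs K n) (Ss K n) from funext fun z => by cases z <;> rfl]
    exact Set.Sum.elim_range _ _
  rw [← h1]
  have h2 : (Set.range fun z : Fin n ⊕ Fin n =>
      RingQuot.mkAlgHom K (ShiftRel K n) (FreeAlgebra.ι K z))
      = RingQuot.mkAlgHom K (ShiftRel K n) '' Set.range (FreeAlgebra.ι K) := by
    rw [← Set.range_comp]; rfl
  rw [h2, ← AlgHom.map_adjoin, FreeAlgebra.adjoin_range_ι, Algebra.map_top]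
  exact (AlgHom.range_eq_top _).2 (RingQuot.mkAlgHom_surjective K _)

noncomputable def monSA {n : ℕ} (p : (Fin n → ℕ) × (Fin n → ℕ)) : ShiftAlg K n :=
  xmon K p.1 * smon K p.2

lemma hXmul {n : ℕ} (i : Fin n) (u : ShiftAlg K n)
    (hu : u ∈ Submodule.span K (Set.range (monSA K (n := n)))) :
    Xs K n i * u ∈ Submodule.span K (Set.range (monSA K (n := n))) := by
  induction hu using Submodule.span_induction with
  | mem v hv =>
    obtain ⟨⟨a, b⟩, rfl⟩ := hv
    rw [monSA, ← mul_assoc, xmon_succ]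
    exact Submodule.subset_span ⟨(Function.update a i (a i + 1), b), rfl⟩
  | zero => rw [mul_zero]; exact Submodule.zero_mem _
  | add x y _ _ hx hy => rw [mul_add]; exact Submodule.add_mem _ hx hy
  | smul r x _ hx => rw [mul_smul_comm]; exact Submodule.smul_mem _ r hx

lemma hSmulmon {n : ℕ} (i : Fin n) :
    ∀ (k : ℕ) (a b : Fin n → ℕ), (∑ j, a j) = k →
      Ss K n i * (xmon K a * smon K b) ∈
        Submodule.span K (Set.range (monSA K (n := n))) := by
  intro k
  induction k using Nat.strong_induction_on with
  | _ k ih =>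
    intro a b hk
    by_cases ha : ∀ j, a j = 0
    · have haz : a = fun _ => 0 := funext ha
      subst haz
      rw [xmon_zero, one_mul, smon_succ]
      have : smon K (Function.update b i (b i + 1))
          = monSA K ((fun _ => 0), Function.update b i (b i + 1)) := by
        rw [monSA, xmon_zero, one_mul]
      rw [this]
      exact Submodule.subset_span ⟨_, rfl⟩
    · push_neg at ha
      obtain ⟨j, hj⟩ := ha
      set a' := Function.update a j (a j - 1) with ha'
      have hupd : Function.update a' j (a' j + 1) = a := by
        funext x
        rcases eq_or_ne x j with rfl | hx
        · simp [ha', Function.update_self]; omega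
        · simp [ha', Function.update_of_ne hx]
      have h1 : ∑ m, a' m = (a j - 1) + ∑ m ∈ Finset.univ \ {j}, a m :=
        Finset.sum_update_of_mem (Finset.mem_univ j) a (a j - 1)
      have h2 : ∑ m, a m = a j + ∑ m ∈ Finset.univ \ {j}, a m := by
        rw [← Finset.erase_eq]
        exact (Finset.add_sum_erase _ _ (Finset.mem_univ j)).symm
      have hsum : (∑ m, a' m) < k := by omega
      have hxa : xmon K a = Xs K n j * xmon K a' := by rw [xmon_succ, hupd]
      rw [hxa, mul_assoc, ← mul_assoc (Ss K n i)]
      rcases eq_or_ne j i with rfl | hne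
      · rw [rshift, add_mul, mul_assoc]
        exact Submodule.add_mem _
          (hXmul K j _ (ih _ hsum a' b rfl))
          (ih _ hsum a' b rfl)
      · rw [rsx K i j hne.symm, mul_assoc]
        exact hXmul K j _ (ih _ hsum a' b rfl)

lemma hSmul {n : ℕ} (i : Fin n) (u : ShiftAlg K n)
    (hu : u ∈ Submodule.span K (Set.range (monSA K (n := n)))) :
    Ss K n i * u ∈ Submodule.span K (Set.range (monSA K (n := n))) := by
  induction hu using Submodule.span_induction with
  | mem v hv =>
    obtain ⟨⟨a, b⟩, rfl⟩ := hv
    exact hSmulmon K i _ a b rfl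
  | zero => rw [mul_zero]; exact Submodule.zero_mem _
  | add x y _ _ hx hy => rw [mul_add]; exact Submodule.add_mem _ hx hy
  | smul r x _ hx => rw [mul_smul_comm]; exact Submodule.smul_mem _ r hx

lemma span_top {n : ℕ} :
    Submodule.span K (Set.range (monSA K (n := n))) = ⊤ := by
  set M := Submodule.span K (Set.range (monSA K (n := n))) with hM
  rw [eq_top_iff]
  intro u _
  have hone : (1 : ShiftAlg K n) ∈ M := by
    have : (1 : ShiftAlg K n) = monSA K ((fun _ => 0), (fun _ => 0)) := by
      rw [monSA, xmon_zero, smon_zero, one_mul]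
    rw [this]
    exact Submodule.subset_span ⟨_, rfl⟩
  have hu : u ∈ Algebra.adjoin K (Set.range (Xs K n) ∪ Set.range (Ss K n)) := by
    rw [hadjtop]; trivial
  have key : ∀ v ∈ M, u * v ∈ M := by
    refine Algebra.adjoin_induction (p := fun x _ => ∀ v ∈ M, x * v ∈ M)
      ?_ ?_ ?_ ?_ hu
    · intro x hx
      rcases hx with ⟨i, rfl⟩ | ⟨i, rfl⟩
      · exact fun v hv => hXmul K i v hv
      · exact fun v hv => hSmul K i v hv
    · intro r v hv
      rw [← Algebra.smul_def r v]
      exact Submodule.smul_mem _ r hv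
    · intro x y hxm hym ihx ihy v hv
      rw [add_mul]
      exact Submodule.add_mem _ (ihx v hv) (ihy v hv)
    · intro x y hxm hym ihx ihy v hv
      rw [mul_assoc]
      exact ihx _ (ihy v hv)
  simpa using key 1 hone

lemma phi_mon {n : ℕ} (a b : Fin n → ℕ) :
    phi K n (xmon K a * smon K b) = Tpow K a * Dpow K b := by
  rw [map_mul]
  congr 1
  · rw [xmon, map_list_prod, List.map_ofFn, Tpow]
    exact congrArg List.prod (congrArg List.ofFn (funext fun i => by
      simp [Function.comp, map_pow, phi_x]))
  · rw [smon, map_list_prod, List.map_ofFn, Dpow]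
    exact congrArg List.prod (congrArg List.ofFn (funext fun i => by
      simp [Function.comp, map_pow, phi_s]))

lemma phi_inj {n : ℕ} : Function.Injective (phi K n) := by
  rw [injective_iff_map_eq_zero]
  intro u hu
  have hmem' : u ∈ Submodule.span K (Set.range (monSA K (n := n))) := by
    rw [span_top]; trivial
  rw [Finsupp.mem_span_range_iff_exists_finsupp] at hmem'
  obtain ⟨l, hl⟩ := hmem'
  have hcomb : Finsupp.linearCombination K
      (fun p : (Fin n → ℕ) × (Fin n → ℕ) => Tpow K p.1 * Dpow K p.2) l = 0 := by
    rw [Finsupp.linearCombination_apply, ← hu, ← hl, map_finsuppSum]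
    apply Finsupp.sum_congr
    intro p _
    rw [map_smul, monSA, phi_mon]
  have hl0 := linearIndependent_iff.1 (TD_li K) l hcomb
  rw [← hl, hl0, Finsupp.sum_zero_index]

lemma phi_mem {n : ℕ} (u : ShiftAlg K n) : phi K n u ∈ WeylAlg K n := by
  have hu : u ∈ Algebra.adjoin K (Set.range (Xs K n) ∪ Set.range (Ss K n)) := by
    rw [hadjtop]; trivial
  refine Algebra.adjoin_induction (p := fun x _ => phi K n x ∈ WeylAlg K n) ?_ ?_ ?_ ?_ hu
  · intro x hx
    rcases hx with ⟨i, rfl⟩ | ⟨i, rfl⟩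
    · rw [phi_x]
      show Xop K i * Dop K i ∈ Algebra.adjoin K _
      exact Subalgebra.mul_mem _ (Algebra.subset_adjoin (Or.inl ⟨i, rfl⟩))
        (Algebra.subset_adjoin (Or.inr ⟨i, rfl⟩))
    · rw [phi_s]
      exact Algebra.subset_adjoin (Or.inr ⟨i, rfl⟩)
  · intro r
    rw [AlgHom.commutes]
    exact Subalgebra.algebraMap_mem _ r
  · intro x y _ _ hx hy
    rw [map_add]
    exact add_mem hx hy
  · intro x y _ _ hx hy
    rw [map_mul]
    exact mul_mem hx hy

end Aux

/-- The operators `θ_i := X_i ∘ D_i` and `D_j` satisfy the defining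
relations of the `n`-th shift algebra, the family `{θ^a ∘ D^b}` is linearly independent
over `K`, and consequently `x_i ↦ θ_i`, `s_i ↦ D_i` realizes the `n`-th shift algebra
as a `K`-subalgebra of the `n`-th Weyl algebra `A_n` via an injective `K`-algebra
homomorphism. -/
theorem shift_algebra_embeds_in_weyl (K : Type) [Field K] [CharZero K]
    (n : ℕ) (hn : 0 < n) :
    (∀ i : Fin n, Dop K i * thetaOp K i = (thetaOp K i + 1) * Dop K i) ∧
    (∀ i j : Fin n, i ≠ j → Dop K i * thetaOp K j = thetaOp K j * Dop K i) ∧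
    (∀ i j : Fin n, thetaOp K i * thetaOp K j = thetaOp K j * thetaOp K i) ∧
    (∀ i j : Fin n, Dop K i * Dop K j = Dop K j * Dop K i) ∧
    LinearIndependent K
      (fun p : (Fin n → ℕ) × (Fin n → ℕ) => Tpow K p.1 * Dpow K p.2) ∧
    ∃ φ : ShiftAlg K n →ₐ[K] Module.End K (MvPolynomial (Fin n) K),
      Function.Injective φ ∧
      (∀ a : ShiftAlg K n, φ a ∈ WeylAlg K n) ∧
      (∀ i : Fin n,
        φ (RingQuot.mkAlgHom K (ShiftRel K n) (FreeAlgebra.ι K (Sum.inl i)))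
          = thetaOp K i) ∧
      (∀ i : Fin n,
        φ (RingQuot.mkAlgHom K (ShiftRel K n) (FreeAlgebra.ι K (Sum.inr i)))
          = Dop K i) := by
  refine ⟨hDtheta K, hDthetane K, hTT K, hDD K, TD_li K, phi K n, phi_inj K, phi_mem K,
    phi_x K, phi_s K⟩
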